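/- Assume a_i − a_j ∉ λ₀·ℤ for all i ≠ j in Fin n, so that distinct capped orbits have distinct actions. Let d be a Floer-type differential on C with a singular decomposition (α_1,…,α_p, η_1,…,η_r, γ_1,…,γ_r), r ≥ 1, indexed so that A(γ_1) − A(η_1) = β_min is the minimal bar. Let x̄_* be the unique capped orbit appearing in η_1 with A(x̄_*) = A(η_1), and let ȳ_* be the unique capped orbit appearing in γ_1 with A(ȳ_*) = A(γ_1). Then ⟨d x̄_*, ȳ_*⟩ = 1. -/

import Mathlib

/-!  Common setup: `Λ := LaurentSeries (ZMod 2)`, `C := Fin n → Λ`, the action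
functional `A`, orthogonality, capped orbits, the pairing `⟨d x̄, ȳ⟩`,
Floer-type differentials and singular decompositions. -/

noncomputable section

/-- The Novikov field `Λ = 𝔽₂((q))`, realized as formal Laurent series over `ZMod 2`. -/
abbrev Lam : Type := LaurentSeries (ZMod 2)

open Classical in
/-- The action `A : C → ℝ ∪ {+∞}`: `A 0 = ⊤` and for `ξ ≠ 0`,
`A ξ = min { a i + λ₀ • ord (ξ i) | ξ i ≠ 0 }`. -/
def actA (n : ℕ) (lam0 : ℝ) (a : Fin n → ℝ) (xi : Fin n → Lam) : WithTop ℝ :=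
  Finset.univ.inf fun i : Fin n =>
    if xi i = 0 then (⊤ : WithTop ℝ)
    else ((a i + lam0 * ((xi i).order : ℝ) : ℝ) : WithTop ℝ)

/-- A finite family `(ξ j)` of vectors of `C` is orthogonal if
`A (∑ λ_j • ξ_j) = min_j A (λ_j • ξ_j)` for all coefficients `λ_j ∈ Λ`. -/
def IsOrthogonalFamily (n : ℕ) (lam0 : ℝ) (a : Fin n → ℝ) {ι : Type} [Fintype ι]
    (xi : ι → (Fin n → Lam)) : Prop :=
  ∀ c : ι → Lam,
    actA n lam0 a (∑ j, c j • xi j) = Finset.univ.inf fun j => actA n lam0 a (c j • xi j)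

/-- The capped orbit `q^k eᵢ`. -/
def cappedOrbit (n : ℕ) (i : Fin n) (k : ℤ) : Fin n → Lam :=
  Pi.single i (HahnSeries.single k 1)

/-- `⟨d x̄, ȳ⟩ ∈ 𝔽₂` for `x̄ = q^k eᵢ` and `ȳ = q^l eⱼ`: the `(l - k)`-th Laurent
coefficient of the `j`-th component of `d eᵢ`. -/
def pairing (n : ℕ) (d : (Fin n → Lam) →ₗ[Lam] (Fin n → Lam)) (i j : Fin n) (k l : ℤ) :
    ZMod 2 :=
  ((d (Pi.single i 1)) j).coeff (l - k)

/-- The set of arrow lengths `A ȳ - A x̄` over pairs of capped orbits with `⟨d x̄, ȳ⟩ = 1`. -/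
def arrowLengths (n : ℕ) (lam0 : ℝ) (a : Fin n → ℝ)
    (d : (Fin n → Lam) →ₗ[Lam] (Fin n → Lam)) : Set ℝ :=
  {t : ℝ | ∃ (i j : Fin n) (k l : ℤ),
    pairing n d i j k l = 1 ∧ t = (a j + lam0 * l) - (a i + lam0 * k)}

/-- The set of values `A (d ξ) - A ξ` over `ξ ∈ C` with `d ξ ≠ 0`. -/
def actionGaps (n : ℕ) (lam0 : ℝ) (a : Fin n → ℝ)
    (d : (Fin n → Lam) →ₗ[Lam] (Fin n → Lam)) : Set ℝ :=
  {t : ℝ | ∃ xi : Fin n → Lam, d xi ≠ 0 ∧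
    actA n lam0 a (d xi) = actA n lam0 a xi + (t : WithTop ℝ)}

/-- A Floer-type differential on `C`: a `Λ`-linear map squaring to zero that strictly
increases the action. -/
def IsFloerDifferential (n : ℕ) (lam0 : ℝ) (a : Fin n → ℝ)
    (d : (Fin n → Lam) →ₗ[Lam] (Fin n → Lam)) : Prop :=
  d ∘ₗ d = 0 ∧
    ∀ xi : Fin n → Lam, xi ≠ 0 → d xi ≠ 0 → actA n lam0 a xi < actA n lam0 a (d xi)

/-- A singular decomposition of `(C, d)`: `p + 2r = n` and an orthogonal basis
`α₁,…,α_p, η₁,…,η_r, γ₁,…,γ_r` of `C` over `Λ` with `d αᵢ = 0` and `d ηⱼ = γⱼ`. -/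
def IsSingularDecomposition (n : ℕ) (lam0 : ℝ) (a : Fin n → ℝ)
    (d : (Fin n → Lam) →ₗ[Lam] (Fin n → Lam)) (p r : ℕ)
    (alpha : Fin p → (Fin n → Lam)) (eta gamma : Fin r → (Fin n → Lam)) : Prop :=
  p + 2 * r = n ∧
  IsOrthogonalFamily n lam0 a (Sum.elim alpha (Sum.elim eta gamma)) ∧
  LinearIndependent Lam (Sum.elim alpha (Sum.elim eta gamma)) ∧
  Submodule.span Lam (Set.range (Sum.elim alpha (Sum.elim eta gamma))) = ⊤ ∧
  (∀ i, d (alpha i) = 0) ∧ (∀ j, d (eta j) = gamma j)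

/-- The set of bars `A (γ j) - A (η j)` of a singular decomposition; its infimum is the
minimal bar `β_min` when `r ≥ 1`. -/
def barSet (n : ℕ) (lam0 : ℝ) (a : Fin n → ℝ) {r : ℕ}
    (eta gamma : Fin r → (Fin n → Lam)) : Set ℝ :=
  {t : ℝ | ∃ j : Fin r, actA n lam0 a (gamma j) = actA n lam0 a (eta j) + (t : WithTop ℝ)}

end


section Helpers

lemma zmod2_one {x : ZMod 2} (h : x ≠ 0) : x = 1 := by
  revert h; revert x; decide

lemma inf_add_const {ι : Type*} (s : Finset ι) (f : ι → WithTop ℝ) (t : ℝ) :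
    s.inf f + (t : WithTop ℝ) = s.inf fun i => f i + (t : WithTop ℝ) := by
  induction s using Finset.cons_induction with
  | empty => simp
  | cons i s hi ih =>
    simp only [Finset.inf_cons, ← ih]
    rcases le_total (f i) (s.inf f) with h | h
    · rw [inf_eq_left.2 h, inf_eq_left.2 (add_le_add_left h _)]
    · rw [inf_eq_right.2 h, inf_eq_right.2 (add_le_add_left h _)]

lemma actA_le_order {n : ℕ} {lam0 : ℝ} {a : Fin n → ℝ} {xi : Fin n → Lam} {i : Fin n}
    (h : xi i ≠ 0) :
    actA n lam0 a xi ≤ ((a i + lam0 * ((xi i).order : ℝ) : ℝ) : WithTop ℝ) := by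
  classical
  have := Finset.inf_le (f := fun i : Fin n =>
    if xi i = 0 then (⊤ : WithTop ℝ)
    else ((a i + lam0 * ((xi i).order : ℝ) : ℝ) : WithTop ℝ)) (Finset.mem_univ i)
  simp only [if_neg h] at this
  exact le_trans (le_of_eq rfl) this

lemma actA_le_coeff {n : ℕ} {lam0 : ℝ} (hlam0 : 0 < lam0) {a : Fin n → ℝ}
    {xi : Fin n → Lam} {i : Fin n} {k : ℤ} (h : (xi i).coeff k ≠ 0) :
    actA n lam0 a xi ≤ ((a i + lam0 * (k : ℝ) : ℝ) : WithTop ℝ) := by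
  have hne : xi i ≠ 0 := fun h0 => h (by simp [h0])
  refine le_trans (actA_le_order hne) ?_
  have hord : (xi i).order ≤ k := HahnSeries.order_le_of_coeff_ne_zero h
  exact_mod_cast add_le_add_right (mul_le_mul_of_nonneg_left (by exact_mod_cast hord) hlam0.le) _

lemma actA_zero (n : ℕ) (lam0 : ℝ) (a : Fin n → ℝ) : actA n lam0 a 0 = ⊤ := by
  simp [actA]

lemma actA_ne_top {n : ℕ} {lam0 : ℝ} {a : Fin n → ℝ} {xi : Fin n → Lam}
    (h : xi ≠ 0) : actA n lam0 a xi ≠ ⊤ := by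
  obtain ⟨i, hi⟩ := Function.ne_iff.1 h
  intro ht
  have h2 : xi i ≠ 0 := by simpa using hi
  have := actA_le_order (lam0 := lam0) (a := a) h2
  rw [ht] at this
  exact (this.trans_lt (WithTop.coe_lt_top _)).ne rfl

lemma actA_smul {n : ℕ} {lam0 : ℝ} {a : Fin n → ℝ} {c : Lam} (hc : c ≠ 0) (xi : Fin n → Lam) :
    actA n lam0 a (c • xi) = actA n lam0 a xi + ((lam0 * (c.order : ℝ) : ℝ) : WithTop ℝ) := by
  classical
  rw [actA, actA, inf_add_const]
  refine Finset.inf_congr rfl fun i _ => ?_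
  by_cases h : xi i = 0
  · simp [h]
  · have h2 : c * xi i ≠ 0 := mul_ne_zero hc h
    simp only [Pi.smul_apply, smul_eq_mul, if_neg h, if_neg h2,
      HahnSeries.order_mul hc h]
    rw [← WithTop.coe_add, WithTop.coe_eq_coe]
    push_cast
    ring

lemma lt_actA {n : ℕ} {lam0 : ℝ} {a : Fin n → ℝ} {xi : Fin n → Lam} {c : ℝ}
    (h : ∀ i k, (xi i).coeff k ≠ 0 → c < a i + lam0 * k) :
    (c : WithTop ℝ) < actA n lam0 a xi := by
  classical
  rw [actA]
  refine (Finset.lt_inf_iff (WithTop.coe_lt_top c)).2 fun i _ => ?_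
  by_cases hi : xi i = 0
  · simp [hi]
  · rw [if_neg hi]
    exact_mod_cast h i _ (mt HahnSeries.coeff_order_eq_zero.1 hi)

lemma gap_lemma (n : ℕ) (lam0 : ℝ) (a : Fin n → ℝ)
    (d : (Fin n → Lam) →ₗ[Lam] (Fin n → Lam))
    (hd2 : d ∘ₗ d = 0)
    (p r : ℕ) (alpha : Fin p → (Fin n → Lam)) (eta gamma : Fin r → (Fin n → Lam))
    (horth : IsOrthogonalFamily n lam0 a (Sum.elim alpha (Sum.elim eta gamma)))
    (hli : LinearIndependent Lam (Sum.elim alpha (Sum.elim eta gamma)))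
    (hspan : Submodule.span Lam (Set.range (Sum.elim alpha (Sum.elim eta gamma))) = ⊤)
    (hda : ∀ i, d (alpha i) = 0)
    (hde : ∀ j, d (eta j) = gamma j)
    (t0 : ℝ)
    (hbar : ∀ j : Fin r, ∀ t : ℝ,
      actA n lam0 a (gamma j) = actA n lam0 a (eta j) + (t : WithTop ℝ) → t0 ≤ t)
    (zeta : Fin n → Lam) :
    actA n lam0 a zeta + (t0 : WithTop ℝ) ≤ actA n lam0 a (d zeta) := by
  classical
  have hz : ∀ x : Fin n → Lam, (0 : Lam) • x = 0 := fun x => zero_smul Lam x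
  set v : Fin p ⊕ (Fin r ⊕ Fin r) → (Fin n → Lam) := Sum.elim alpha (Sum.elim eta gamma)
    with hv
  let B : Module.Basis (Fin p ⊕ (Fin r ⊕ Fin r)) Lam (Fin n → Lam) := Module.Basis.mk hli (by rw [hspan])
  have hB : ∀ s, B s = v s := fun s => by rw [Module.Basis.mk_apply]
  have hrepr : ∑ s, B.repr zeta s • v s = zeta := by
    conv_rhs => rw [← B.sum_repr zeta]
    exact Finset.sum_congr rfl fun s _ => by rw [hB]
  have hdg : ∀ j, d (gamma j) = 0 := fun j => by
    rw [← hde j, ← LinearMap.comp_apply, hd2, LinearMap.zero_apply]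
  set b : Fin r → Lam := fun j => B.repr zeta (Sum.inr (Sum.inl j)) with hbdef
  have hdz : d zeta = ∑ j, b j • gamma j := by
    conv_lhs => rw [← hrepr]
    rw [map_sum, Fintype.sum_sum_type]
    simp only [map_smul, hv, Sum.elim_inl, Sum.elim_inr, hda, smul_zero, Finset.sum_const_zero,
      zero_add]
    rw [Fintype.sum_sum_type]
    simp only [Sum.elim_inl, Sum.elim_inr, hde, hdg, smul_zero, Finset.sum_const_zero, add_zero,
      hbdef]
  have horth1 := horth (fun s => B.repr zeta s)
  rw [hrepr] at horth1
  have horth2 := horth (Sum.elim (0 : Fin p → Lam) (Sum.elim (0 : Fin r → Lam) b))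
  have hsum2 : ∑ s, (Sum.elim (0 : Fin p → Lam) (Sum.elim (0 : Fin r → Lam) b)) s • v s
      = d zeta := by
    rw [hdz, Fintype.sum_sum_type, Fintype.sum_sum_type]
    simp only [Sum.elim_inl, Sum.elim_inr, Pi.zero_apply, hz, Finset.sum_const_zero, zero_add,
      add_zero, hv]
  rw [hsum2] at horth2
  rw [horth2]
  refine Finset.le_inf fun s _ => ?_
  rcases s with i | j | j
  · simp only [Sum.elim_inl, Pi.zero_apply, hz, actA_zero]
    exact le_top
  · simp only [Sum.elim_inr, Sum.elim_inl, Pi.zero_apply, hz, actA_zero]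
    exact le_top
  · simp only [Sum.elim_inr]
    by_cases hbj : b j = 0
    · simp only [Sum.elim_inr, hbj, hz, actA_zero]
      exact le_top
    · have hg : gamma j ≠ 0 := by
        have := hli.ne_zero (Sum.inr (Sum.inr j)); simpa [hv] using this
      have he : eta j ≠ 0 := by
        have := hli.ne_zero (Sum.inr (Sum.inl j)); simpa [hv] using this
      have hzle : actA n lam0 a zeta ≤ actA n lam0 a (b j • eta j) := by
        rw [horth1]
        have h5 := Finset.inf_le
          (f := fun s => actA n lam0 a ((fun s => B.repr zeta s) s • v s))
          (Finset.mem_univ (Sum.inr (Sum.inl j)))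
        simpa [hv, hbdef] using h5
      obtain ⟨u, hu⟩ := WithTop.ne_top_iff_exists.1 (actA_ne_top (lam0 := lam0) (a := a) he)
      obtain ⟨w, hw⟩ := WithTop.ne_top_iff_exists.1 (actA_ne_top (lam0 := lam0) (a := a) hg)
      have ht : t0 ≤ w - u := by
        refine hbar j _ ?_
        rw [← hu, ← hw, ← WithTop.coe_add, WithTop.coe_eq_coe]
        ring
      have hvg : v (Sum.inr (Sum.inr j)) = gamma j := by rw [hv]; rfl
      rw [hvg, actA_smul hbj, ← hw]
      rw [actA_smul hbj, ← hu] at hzle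
      calc actA n lam0 a zeta + (t0 : WithTop ℝ)
          ≤ ((u : WithTop ℝ) + ((lam0 * ((b j).order : ℝ) : ℝ) : WithTop ℝ)) + (t0 : WithTop ℝ) :=
            add_le_add_left hzle _
        _ ≤ (w : WithTop ℝ) + ((lam0 * ((b j).order : ℝ) : ℝ) : WithTop ℝ) := by
            rw [← WithTop.coe_add, ← WithTop.coe_add, ← WithTop.coe_add, WithTop.coe_le_coe]
            linarith

end Helpers

/-- Assume all capped orbits have pairwise distinct actions. Let `d` be a
Floer-type differential with a singular decomposition indexed so that
`A (γ 0) - A (η 0) = β_min` is the minimal bar. If `x̄_* = q^k* e_{i*}` is the capped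
orbit appearing in `η 0` of action `A (η 0)` and `ȳ_* = q^l* e_{j*}` is the capped orbit
appearing in `γ 0` of action `A (γ 0)`, then `⟨d x̄_*, ȳ_*⟩ = 1`. -/
theorem pairing_of_minimal_bar (n : ℕ) (lam0 : ℝ) (hlam0 : 0 < lam0) (a : Fin n → ℝ)
    (hdist : ∀ i j : Fin n, i ≠ j → ∀ k : ℤ, a i - a j ≠ lam0 * k)
    (d : (Fin n → Lam) →ₗ[Lam] (Fin n → Lam))
    (hFloer : IsFloerDifferential n lam0 a d)
    (p r : ℕ) (hr : 1 ≤ r)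
    (alpha : Fin p → (Fin n → Lam)) (eta gamma : Fin r → (Fin n → Lam))
    (hdec : IsSingularDecomposition n lam0 a d p r alpha eta gamma)
    (hmin : ∀ j : Fin r, ∀ t0 t : ℝ,
      actA n lam0 a (gamma ⟨0, hr⟩) = actA n lam0 a (eta ⟨0, hr⟩) + (t0 : WithTop ℝ) →
      actA n lam0 a (gamma j) = actA n lam0 a (eta j) + (t : WithTop ℝ) → t0 ≤ t)
    (istar jstar : Fin n) (kstar lstar : ℤ)
    (hxmem : ((eta ⟨0, hr⟩) istar).coeff kstar ≠ 0)
    (hxact : actA n lam0 a (eta ⟨0, hr⟩) = ((a istar + lam0 * kstar : ℝ) : WithTop ℝ))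
    (hymem : ((gamma ⟨0, hr⟩) jstar).coeff lstar ≠ 0)
    (hyact : actA n lam0 a (gamma ⟨0, hr⟩) = ((a jstar + lam0 * lstar : ℝ) : WithTop ℝ)) :
    pairing n d istar jstar kstar lstar = 1 := by
  classical
  obtain ⟨hd2, hincr⟩ := hFloer
  obtain ⟨hpn, horth, hli, hspan, hda, hde⟩ := hdec
  set t0 : ℝ := (a jstar + lam0 * lstar) - (a istar + lam0 * kstar) with ht0def
  have ht0 : actA n lam0 a (gamma ⟨0, hr⟩) = actA n lam0 a (eta ⟨0, hr⟩) + (t0 : WithTop ℝ) := by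
    rw [hxact, hyact, ← WithTop.coe_add, WithTop.coe_eq_coe, ht0def]
    ring
  set xbar : Fin n → Lam := Pi.single istar (HahnSeries.single kstar 1) with hxb
  set xi : Fin n → Lam := eta ⟨0, hr⟩ - xbar with hxi
  have hxbcoeff : ∀ i k, (xbar i).coeff k
      = if i = istar ∧ k = kstar then (1 : ZMod 2) else 0 := by
    intro i k
    by_cases hi : i = istar
    · subst hi
      rw [hxb, Pi.single_eq_same, HahnSeries.coeff_single]
      by_cases hk : k = kstar
      · simp [hk]
      · simp [hk]
    · rw [hxb, Pi.single_eq_of_ne hi]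
      simp [hi]
  have horbit : ∀ i k, (xi i).coeff k ≠ 0 → a istar + lam0 * kstar < a i + lam0 * k := by
    intro i k hik
    have hsub : (xi i).coeff k = (eta ⟨0, hr⟩ i).coeff k - (xbar i).coeff k := by
      rw [hxi, Pi.sub_apply, HahnSeries.coeff_sub]
    by_cases hcase : i = istar ∧ k = kstar
    · exfalso
      obtain ⟨h1, h2⟩ := hcase
      subst h1; subst h2
      rw [hsub, hxbcoeff] at hik
      simp only [and_self, if_pos] at hik
      rw [zmod2_one hxmem, sub_self] at hik
      exact hik rfl
    · have hx0 : (xbar i).coeff k = 0 := by rw [hxbcoeff, if_neg hcase]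
      rw [hsub, hx0, sub_zero] at hik
      have hle : ((a istar + lam0 * kstar : ℝ) : WithTop ℝ)
          ≤ ((a i + lam0 * (k : ℝ) : ℝ) : WithTop ℝ) := by
        rw [← hxact]
        exact actA_le_coeff hlam0 hik
      have hle2 : a istar + lam0 * kstar ≤ a i + lam0 * k := by exact_mod_cast hle
      rcases lt_or_eq_of_le hle2 with h | h
      · exact h
      · exfalso
        by_cases hii : i = istar
        · subst hii
          have hkk : k ≠ kstar := fun hk => hcase ⟨rfl, hk⟩
          have h3 : lam0 * (kstar : ℝ) = lam0 * (k : ℝ) := by linarith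
          have h4 : (kstar : ℝ) = (k : ℝ) := mul_left_cancel₀ hlam0.ne' h3
          exact hkk (by exact_mod_cast h4.symm)
        · exact hdist istar i (fun hq => hii hq.symm) (k - kstar) (by push_cast; linarith)
  have hxilt : ((a istar + lam0 * kstar : ℝ) : WithTop ℝ) < actA n lam0 a xi := lt_actA horbit
  have hgap := gap_lemma n lam0 a d hd2 p r alpha eta gamma horth hli hspan hda hde t0
    (fun j t ht => hmin j t0 t ht0 ht) xi
  have hdxilt : ((a jstar + lam0 * lstar : ℝ) : WithTop ℝ) < actA n lam0 a (d xi) := by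
    have h1 : ((a istar + lam0 * kstar : ℝ) : WithTop ℝ) + (t0 : WithTop ℝ)
        < actA n lam0 a xi + (t0 : WithTop ℝ) :=
      WithTop.add_lt_add_right WithTop.coe_ne_top hxilt
    calc ((a jstar + lam0 * lstar : ℝ) : WithTop ℝ)
        = ((a istar + lam0 * kstar : ℝ) : WithTop ℝ) + (t0 : WithTop ℝ) := by
          rw [← WithTop.coe_add, WithTop.coe_eq_coe, ht0def]; ring
      _ < actA n lam0 a xi + (t0 : WithTop ℝ) := h1
      _ ≤ actA n lam0 a (d xi) := hgap
  have hdxi0 : ((d xi) jstar).coeff lstar = 0 := by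
    by_contra h
    exact absurd (actA_le_coeff hlam0 h) (not_le.2 hdxilt)
  have hdxbar : d xbar = gamma ⟨0, hr⟩ - d xi := by
    have hx2 : xbar = eta ⟨0, hr⟩ - xi := by rw [hxi]; abel
    rw [hx2, map_sub, hde]
  have hpairne : ((d xbar) jstar).coeff lstar ≠ 0 := by
    rw [hdxbar, Pi.sub_apply, HahnSeries.coeff_sub, hdxi0, sub_zero]
    exact hymem
  have hpe : pairing n d istar jstar kstar lstar = ((d xbar) jstar).coeff lstar := by
    have hxbar_smul : xbar
        = (HahnSeries.single kstar 1 : Lam) • (Pi.single istar (1 : Lam) : Fin n → Lam) := by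
      funext j
      by_cases hj : j = istar
      · subst hj
        rw [hxb, Pi.smul_apply, Pi.single_eq_same, Pi.single_eq_same, smul_eq_mul, mul_one]
      · rw [hxb, Pi.smul_apply, Pi.single_eq_of_ne hj, Pi.single_eq_of_ne hj, smul_eq_mul,
          mul_zero]
    rw [pairing, hxbar_smul, map_smul, Pi.smul_apply, smul_eq_mul]
    have hs := HahnSeries.coeff_single_mul_add (r := (1 : ZMod 2))
      (x := (d (Pi.single istar 1)) jstar) (a := lstar - kstar) (b := kstar)
    rw [show lstar - kstar + kstar = lstar by omega] at hs
    rw [hs, one_mul]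
  rw [hpe]
  exact zmod2_one hpairne
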